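/- Fix p ∈ [1,∞] and θ ∈ (0,π/2), and define x_p(θ) = ‖(1, cotθ)‖_p, i.e. x_p(θ) = (1 + cot^p θ)^{1/p} for p < ∞ and x_∞(θ) = max(1, cotθ). Then for every x ∈ [0,∞): x·tanθ < y_p(x) if and only if x < x_p(θ). -/

import Mathlib

open MeasureTheory Set Real Filter Topology
open scoped ENNReal

noncomputable section

/-- The function `y_p : [0,∞) → [0,∞]`: for `p < ∞`, `y_p(x) = ∞` on `[0,1]` and
`y_p(x) = (1 + 1/(x^p - 1))^{1/p}` on `(1,∞)`; for `p = ∞`, `y_∞(x) = ∞` on `[0,1)`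
and `y_∞(x) = 1` on `[1,∞)`. -/
def ypR (p : ℝ≥0∞) (x : ℝ) : ℝ≥0∞ :=
  if p = ⊤ then (if x < 1 then ⊤ else 1)
  else if x ≤ 1 then ⊤
  else ENNReal.ofReal ((1 + 1 / (x ^ p.toReal - 1)) ^ (1 / p.toReal))

/-- `x_p(θ) = ‖(1, cot θ)‖_p`. -/
def xpR (p : ℝ≥0∞) (θ : ℝ) : ℝ :=
  if p = ⊤ then max 1 (Real.cot θ)
  else (1 + Real.cot θ ^ p.toReal) ^ (1 / p.toReal)

theorem stmt10 (p : ℝ≥0∞) (hp : 1 ≤ p) (θ : ℝ) (hθ : θ ∈ Ioo 0 (π / 2)) :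
    ∀ x : ℝ, 0 ≤ x →
      (ENNReal.ofReal (x * Real.tan θ) < ypR p x ↔ x < xpR p θ) := by
  obtain ⟨hθ0, hθ2⟩ := hθ
  have htan : 0 < Real.tan θ := Real.tan_pos_of_pos_of_lt_pi_div_two hθ0 hθ2
  have hcot : Real.cot θ = 1 / Real.tan θ := by
    have hsin : 0 < Real.sin θ := Real.sin_pos_of_pos_of_lt_pi hθ0 (by linarith [Real.pi_pos])
    have hcos : 0 < Real.cos θ := Real.cos_pos_of_mem_Ioo ⟨by linarith [Real.pi_pos], hθ2⟩
    rw [Real.cot_eq_cos_div_sin, Real.tan_eq_sin_div_cos]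
    field_simp
  have hcotpos : 0 < Real.cot θ := by rw [hcot]; positivity
  have htc : Real.tan θ * Real.cot θ = 1 := by rw [hcot]; field_simp
  intro x hx
  by_cases hpt : p = ⊤
  · subst hpt
    rw [show ypR ⊤ x = (if x < 1 then ⊤ else 1) from if_pos rfl,
      show xpR ⊤ θ = max 1 (Real.cot θ) from if_pos rfl]
    by_cases hx1 : x < 1
    · simp only [if_pos hx1]
      constructor
      · intro _; exact lt_max_iff.2 (Or.inl hx1)
      · intro _; exact ENNReal.ofReal_lt_top
    · rw [if_neg hx1, show (1 : ℝ≥0∞) = ENNReal.ofReal 1 by simp,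
        ENNReal.ofReal_lt_ofReal_iff one_pos, lt_max_iff]
      constructor
      · intro h
        right
        rw [hcot, lt_div_iff₀ htan]
        exact h
      · rintro (h | h)
        · exact absurd h hx1
        · rw [hcot, lt_div_iff₀ htan] at h
          exact h
  · have hq0 : 0 < p.toReal := ENNReal.toReal_pos (by intro h; simp [h] at hp) hpt
    set q := p.toReal with hqdef
    simp only [ypR, xpR, if_neg hpt]
    have hxp1 : 1 < (1 + Real.cot θ ^ q) ^ (1 / q) := by
      rw [Real.one_lt_rpow_iff_of_pos (by positivity)]
      left
      constructor
      · have : 0 < Real.cot θ ^ q := Real.rpow_pos_of_pos hcotpos q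
        linarith
      · positivity
    by_cases hx1 : x ≤ 1
    · rw [if_pos hx1]
      constructor
      · intro _; linarith
      · intro _; exact ENNReal.ofReal_lt_top
    · push_neg at hx1
      rw [if_neg (not_le.2 hx1)]
      simp only [one_div]
      have hu1 : 1 < x ^ q := by
        rw [Real.one_lt_rpow_iff_of_pos (by linarith)]
        exact Or.inl ⟨hx1, hq0⟩
      have hA : 0 < 1 + (x ^ q - 1)⁻¹ := by
        have : 0 < (x ^ q - 1)⁻¹ := inv_pos.2 (by linarith)
        linarith
      rw [ENNReal.ofReal_lt_ofReal_iff (Real.rpow_pos_of_pos hA _)]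
      rw [show x * Real.tan θ < (1 + (x ^ q - 1)⁻¹) ^ q⁻¹ ↔
            (x * Real.tan θ) ^ q < ((1 + (x ^ q - 1)⁻¹) ^ q⁻¹) ^ q from
          (Real.rpow_lt_rpow_iff (mul_nonneg hx htan.le)
            (Real.rpow_pos_of_pos hA _).le hq0).symm,
        show x < (1 + Real.cot θ ^ q) ^ q⁻¹ ↔
            x ^ q < ((1 + Real.cot θ ^ q) ^ q⁻¹) ^ q from
          (Real.rpow_lt_rpow_iff (by linarith)
            (Real.rpow_nonneg (by nlinarith [Real.rpow_pos_of_pos hcotpos q]) _) hq0).symm,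
        Real.rpow_inv_rpow hA.le hq0.ne',
        Real.rpow_inv_rpow (by nlinarith [Real.rpow_pos_of_pos hcotpos q]) hq0.ne',
        Real.mul_rpow (by linarith) htan.le]
      set u := x ^ q with hudef
      set t := Real.tan θ ^ q with htdef
      set c := Real.cot θ ^ q with hcdef
      have htpos : 0 < t := Real.rpow_pos_of_pos htan q
      have hcpos : 0 < c := Real.rpow_pos_of_pos hcotpos q
      have htc' : t * c = 1 := by
        rw [htdef, hcdef, ← Real.mul_rpow htan.le hcotpos.le, htc, Real.one_rpow]
      have hu1' : 0 < u - 1 := by linarith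
      have hu0 : 0 < u := by linarith
      rw [show (1 : ℝ) + (u - 1)⁻¹ = u / (u - 1) by field_simp; ring,
        lt_div_iff₀ hu1']
      constructor
      · intro h
        by_contra hcon
        push_neg at hcon
        have h3 : t * c ≤ t * (u - 1) :=
          mul_le_mul_of_nonneg_left (by linarith) htpos.le
        rw [htc'] at h3
        nlinarith
      · intro h
        have h3 : t * (u - 1) < t * c :=
          mul_lt_mul_of_pos_left (by linarith) htpos
        rw [htc'] at h3
        nlinarith
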